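/- Let P denote the probability density π(λ) over deterministic classical strategies and suppose a classical model with message alphabet of size d_C exactly reproduces the quantum behavior p(b|x,y) = tr(ρₓ M_{b|y}) for a finite set of states {ρₓ} and a set of measurements including, for each pair (x,x′), the Helstrom measurement for ρₓ and ρ_{x′}. Then for every pair (x,x′), the total weight of deterministic strategies that assign different messages to inputs x and x′ is at least (1/2)·‖ρₓ − ρ_{x′}‖₁, where ‖·‖₁ denotes the trace norm. -/

import Mathlib

open Matrix ComplexOrder

/-- Trace norm of a complex matrix: `‖A‖₁ = tr √(Aᴴ A)`. -/
noncomputable def traceNorm {d : ℕ} (A : Matrix (Fin d) (Fin d) ℂ) : ℝ :=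
  (((Matrix.posSemidef_conjTranspose_mul_self A).1.eigenvectorUnitary : Matrix (Fin d) (Fin d) ℂ) *
    diagonal (((↑) : ℝ → ℂ) ∘ Real.sqrt ∘ (Matrix.posSemidef_conjTranspose_mul_self A).1.eigenvalues) *
    star ((Matrix.posSemidef_conjTranspose_mul_self A).1.eigenvectorUnitary :
      Matrix (Fin d) (Fin d) ℂ)).trace.re

/-- A classical model reproducing the quantum behavior of states `ρ` and measurements `M`
(including, for each pair, the Helstrom measurement discriminating them) must assign, for
every pair `x, x'`, total weight at least `‖ρ x − ρ x'‖₁ / 2` to deterministic strategies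
sending different messages on `x` and `x'`. -/
theorem state_discrimination_restricts_classical_models
    {d dC : ℕ} {X Y B Λ : Type*} [Fintype X] [Fintype Y] [Fintype B] [Fintype Λ]
    (ρ : X → Matrix (Fin d) (Fin d) ℂ)
    (hρ : ∀ x, (ρ x).PosSemidef ∧ (ρ x).trace = 1)
    (M : Y → B → Matrix (Fin d) (Fin d) ℂ)
    (hM : ∀ y b, (M y b).PosSemidef) (hM1 : ∀ y, ∑ b, M y b = 1)
    (π' : Λ → ℝ) (hπ : ∀ l, 0 ≤ π' l) (hπ1 : ∑ l, π' l = 1)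
    (DA : Λ → X → Fin dC)
    (pB : Λ → Fin dC → Y → B → ℝ)
    (hpB : ∀ l c y b, 0 ≤ pB l c y b) (hpB1 : ∀ l c y, ∑ b, pB l c y b = 1)
    (hmodel : ∀ x y b, ((∑ l, π' l * pB l (DA l x) y b : ℝ) : ℂ) = (ρ x * M y b).trace)
    (hHelstrom : ∀ x x' : X, ∃ (y : Y) (b : B),
        ((ρ x - ρ x') * M y b).trace = ((1/2 * traceNorm (ρ x - ρ x') : ℝ) : ℂ))
    (x x' : X) :
    1/2 * traceNorm (ρ x - ρ x')
      ≤ ∑ l ∈ Finset.univ.filter (fun l => DA l x ≠ DA l x'), π' l := by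
  obtain ⟨y, b, h⟩ := hHelstrom x x'
  have hkey : (1/2 * traceNorm (ρ x - ρ x') : ℝ)
      = (∑ l, π' l * pB l (DA l x) y b) - (∑ l, π' l * pB l (DA l x') y b) := by
    have : (((∑ l, π' l * pB l (DA l x) y b) - (∑ l, π' l * pB l (DA l x') y b) : ℝ) : ℂ)
        = ((1/2 * traceNorm (ρ x - ρ x') : ℝ) : ℂ) := by
      rw [Complex.ofReal_sub, hmodel x y b, hmodel x' y b, ← Matrix.trace_sub,
        ← Matrix.sub_mul, h]
    exact_mod_cast this.symm
  rw [hkey, ← Finset.sum_sub_distrib]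
  have hle1 : ∀ l c, pB l c y b ≤ 1 := fun l c => by
    rw [← hpB1 l c y]
    exact Finset.single_le_sum (fun b' _ => hpB l c y b') (Finset.mem_univ b)
  calc ∑ l, (π' l * pB l (DA l x) y b - π' l * pB l (DA l x') y b)
      = ∑ l ∈ Finset.univ.filter (fun l => DA l x ≠ DA l x'),
          (π' l * pB l (DA l x) y b - π' l * pB l (DA l x') y b) := by
        refine (Finset.sum_filter_of_ne fun l _ hne => ?_).symm
        intro hEq
        exact hne (by rw [hEq]; ring)
    _ ≤ ∑ l ∈ Finset.univ.filter (fun l => DA l x ≠ DA l x'), π' l := by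
        refine Finset.sum_le_sum fun l _ => ?_
        have h1 := hpB l (DA l x') y b
        have h2 := hle1 l (DA l x)
        nlinarith [hπ l]
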